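/- Let η = M φ_{E_1} where E_1 = {1, 2, ..., m-1}. Then η ∈ ker M and ω_i η = t^{c(i)} η for 1 ≤ i ≤ N, where c(i) = i - m for 1 ≤ i ≤ m - 1 and c(i) = N - i for m ≤ i ≤ N. -/

import Mathlib

open Finset

noncomputable section

/-- The space of "fermionic" polynomials: formal linear combinations of
monomials `φ_E = θ_{i₁}⋯θ_{i_m}` indexed by finite sets `E` of indices. -/
abbrev SP (K : Type) [Field K] := Finset ℕ →₀ K

variable {K : Type} [Field K]

/-- basis monomial φ_E -/
def phi (K : Type) [Field K] (E : Finset ℕ) : SP K := Finsupp.single E 1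

/-- linear operator determined by its values on the basis {φ_E} -/
def opOf (v : Finset ℕ → SP K) : SP K →ₗ[K] SP K :=
  Finsupp.lsum K fun E => LinearMap.toSpanSingleton K (SP K) (v E)

/-- the image s_i E of E under the transposition swapping i, i+1 -/
def swapSet (i : ℕ) (E : Finset ℕ) : Finset ℕ := E.image (Equiv.swap i (i + 1))

/-- the Hecke algebra operator T_i acting on anti-commuting variables -/
def heckeT (t : K) (i : ℕ) : SP K →ₗ[K] SP K :=
  opOf fun E =>
    if i ∈ E then
      (if i + 1 ∈ E then -phi K E else phi K (swapSet i E))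
    else
      (if i + 1 ∈ E then (t - 1) • phi K E + t • phi K (swapSet i E)
       else t • phi K E)

/-- signed exterior multiplication θ̂_i -/
def thetaHat (K : Type) [Field K] (i : ℕ) : SP K →ₗ[K] SP K :=
  opOf fun E =>
    if i ∈ E then 0
    else ((-1 : K) ^ (E.filter (· < i)).card) • phi K (insert i E)

/-- formal fermionic derivative ∂_i -/
def fermD (K : Type) [Field K] (i : ℕ) : SP K →ₗ[K] SP K :=
  opOf fun E =>
    if i ∈ E then ((-1 : K) ^ (E.filter (· < i)).card) • phi K (E.erase i)
    else 0

/-- M = Σ_{i=1}^N θ̂_i -/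
def opM (K : Type) [Field K] (N : ℕ) : SP K →ₗ[K] SP K :=
  ∑ i ∈ Finset.Icc 1 N, thetaHat K i

/-- D = Σ_{i=1}^N t^{i-1} ∂_i -/
def opD (t : K) (N : ℕ) : SP K →ₗ[K] SP K :=
  ∑ i ∈ Finset.Icc 1 N, t ^ (i - 1) • fermD K i

/-- auxiliary recursion for the Jucys–Murphy operators (first arg = fuel) -/
def omegaAux (t : K) : ℕ → ℕ → SP K →ₗ[K] SP K
  | 0, _ => LinearMap.id
  | k + 1, i => t⁻¹ • (heckeT t i ∘ₗ omegaAux t k (i + 1) ∘ₗ heckeT t i)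

/-- Jucys–Murphy operator ω_i = t^{i-N} T_i ⋯ T_{N-1} T_{N-1} ⋯ T_i  (ω_N = 1),
via the recursion ω_N = 1, ω_i = t⁻¹ T_i ω_{i+1} T_i. -/
def omega (t : K) (N i : ℕ) : SP K →ₗ[K] SP K := omegaAux t (N - i) i


namespace EtaAux
variable {K : Type} [Field K]

lemma opOf_phi (v : Finset ℕ → SP K) (E : Finset ℕ) : opOf v (phi K E) = v E := by
  simp [opOf, phi, Finsupp.lsum_single]

lemma thetaHat_phi (i : ℕ) (E : Finset ℕ) :
    thetaHat K i (phi K E) =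
      if i ∈ E then 0
      else ((-1 : K) ^ (E.filter (· < i)).card) • phi K (insert i E) := by
  simp [thetaHat, opOf_phi]

lemma heckeT_phi (t : K) (i : ℕ) (E : Finset ℕ) :
    heckeT t i (phi K E) =
      if i ∈ E then
        (if i + 1 ∈ E then -phi K E else phi K (swapSet i E))
      else
        (if i + 1 ∈ E then (t - 1) • phi K E + t • phi K (swapSet i E)
         else t • phi K E) := by
  simp [heckeT, opOf_phi]

lemma mem_swapSet {x k : ℕ} {E : Finset ℕ} :
    x ∈ swapSet k E ↔ Equiv.swap k (k+1) x ∈ E := by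
  simp only [swapSet, Finset.mem_image]
  constructor
  · rintro ⟨e, he, rfl⟩; simpa [Equiv.swap_apply_self] using he
  · intro h; exact ⟨_, h, by simp [Equiv.swap_apply_self]⟩

lemma mem_swapSet_of_ne {x k : ℕ} {E : Finset ℕ} (h1 : x ≠ k) (h2 : x ≠ k+1) :
    x ∈ swapSet k E ↔ x ∈ E := by
  rw [mem_swapSet, Equiv.swap_apply_of_ne_of_ne h1 h2]

lemma k_mem_swapSet {k : ℕ} {E : Finset ℕ} : k ∈ swapSet k E ↔ k+1 ∈ E := by
  rw [mem_swapSet, Equiv.swap_apply_left]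

lemma k1_mem_swapSet {k : ℕ} {E : Finset ℕ} : k+1 ∈ swapSet k E ↔ k ∈ E := by
  rw [mem_swapSet, Equiv.swap_apply_right]

end EtaAux

namespace EtaAux
variable {K : Type} [Field K]

lemma filter_swapSet {i k : ℕ} (h2 : i ≠ k+1) (E : Finset ℕ) :
    ((swapSet k E).filter (· < i)).card = (E.filter (· < i)).card := by
  have key : ∀ e : ℕ, Equiv.swap k (k+1) e < i ↔ e < i := by
    intro e
    rcases eq_or_ne e k with rfl | hek
    · rw [Equiv.swap_apply_left]; omega
    rcases eq_or_ne e (k+1) with rfl | hek1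
    · rw [Equiv.swap_apply_right]; omega
    · rw [Equiv.swap_apply_of_ne_of_ne hek hek1]
  rw [swapSet, Finset.filter_image, Finset.card_image_of_injective _ (Equiv.injective _)]
  congr 1
  apply Finset.filter_congr
  intro x _
  simp [key x]

lemma insert_swapSet {i k : ℕ} (h1 : i ≠ k) (h2 : i ≠ k+1) (E : Finset ℕ) :
    swapSet k (insert i E) = insert i (swapSet k E) := by
  rw [swapSet, Finset.image_insert, Equiv.swap_apply_of_ne_of_ne h1 h2, swapSet]

lemma swapSet_eq_self {k : ℕ} {E : Finset ℕ} (h1 : k ∉ E) (h2 : k+1 ∉ E) :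
    swapSet k E = E := by
  rw [swapSet]
  have : ∀ x ∈ E, Equiv.swap k (k+1) x = x := by
    intro x hx
    exact Equiv.swap_apply_of_ne_of_ne (by rintro rfl; exact h1 hx) (by rintro rfl; exact h2 hx)
  rw [Finset.image_congr (fun x hx => this x (by simpa using hx)), Finset.image_id']

lemma insert_k_swapSet {k : ℕ} {E : Finset ℕ} (hk : k ∈ E) (hk1 : k+1 ∉ E) :
    insert k (swapSet k E) = insert (k+1) E := by
  ext x
  simp only [Finset.mem_insert, mem_swapSet]
  rcases eq_or_ne x k with rfl | hxk
  · simp [hk]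
  rcases eq_or_ne x (k+1) with rfl | hxk1
  · simp [Equiv.swap_apply_right, hk, hxk]
  · rw [Equiv.swap_apply_of_ne_of_ne hxk hxk1]
    simp [hxk, hxk1]

lemma insert_k1_swapSet {k : ℕ} {E : Finset ℕ} (hk : k ∉ E) (hk1 : k+1 ∈ E) :
    insert (k+1) (swapSet k E) = insert k E := by
  ext x
  simp only [Finset.mem_insert, mem_swapSet]
  rcases eq_or_ne x k with rfl | hxk
  · simp [Equiv.swap_apply_left, hk1]
  rcases eq_or_ne x (k+1) with rfl | hxk1
  · simp [hk1]
  · rw [Equiv.swap_apply_of_ne_of_ne hxk hxk1]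
    simp [hxk, hxk1]

lemma filter_lt_succ_card (E : Finset ℕ) (k : ℕ) :
    (E.filter (· < k+1)).card
      = (E.filter (· < k)).card + (if k ∈ E then 1 else 0) := by
  have : E.filter (· < k+1)
      = if k ∈ E then insert k (E.filter (· < k)) else E.filter (· < k) := by
    split
    · ext x
      simp only [Finset.mem_filter, Finset.mem_insert]
      constructor
      · rintro ⟨hxE, hx⟩
        rcases eq_or_ne x k with rfl | hxk
        · exact Or.inl rfl
        · exact Or.inr ⟨hxE, by omega⟩
      · rintro (rfl | ⟨hxE, hx⟩)
        · exact ⟨by assumption, by omega⟩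
        · exact ⟨hxE, by omega⟩
    · ext x
      simp only [Finset.mem_filter]
      constructor
      · rintro ⟨hxE, hx⟩
        refine ⟨hxE, ?_⟩
        rcases eq_or_ne x k with rfl | hxk
        · exact absurd hxE (by assumption)
        · omega
      · rintro ⟨hxE, hx⟩; exact ⟨hxE, by omega⟩
  rw [this]
  split
  · rw [Finset.card_insert_of_notMem (by simp)]
  · simp

end EtaAux

namespace EtaAux
variable {K : Type} [Field K]

lemma swapSet_insert_k {k : ℕ} {E : Finset ℕ} (h1 : k ∉ E) (h2 : k+1 ∉ E) :
    swapSet k (insert k E) = insert (k+1) E := by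
  rw [swapSet, Finset.image_insert, Equiv.swap_apply_left, ← swapSet, swapSet_eq_self h1 h2]

lemma swapSet_insert_k1 {k : ℕ} {E : Finset ℕ} (h1 : k ∉ E) (h2 : k+1 ∉ E) :
    swapSet k (insert (k+1) E) = insert k E := by
  rw [swapSet, Finset.image_insert, Equiv.swap_apply_right, ← swapSet, swapSet_eq_self h1 h2]

lemma thetaHat_heckeT_comm (t : K) {i k : ℕ} (h1 : i ≠ k) (h2 : i ≠ k+1) (E : Finset ℕ) :
    thetaHat K i (heckeT t k (phi K E)) = heckeT t k (thetaHat K i (phi K E)) := by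
  have hks : (k ∈ insert i E) = (k ∈ E) := by
    simp [Finset.mem_insert, (Ne.symm h1)]
  have hk1s : (k+1 ∈ insert i E) = (k+1 ∈ E) := by
    simp [Finset.mem_insert, (Ne.symm h2)]
  rw [heckeT_phi, thetaHat_phi]
  by_cases hiE : i ∈ E
  · have hiS : i ∈ swapSet k E := (mem_swapSet_of_ne h1 h2).2 hiE
    by_cases hk : k ∈ E <;> by_cases hk1 : k+1 ∈ E <;>
      simp [hk, hk1, hiE, hiS, thetaHat_phi]
  · have hiS : i ∉ swapSet k E := fun h => hiE ((mem_swapSet_of_ne h1 h2).1 h)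
    by_cases hk : k ∈ E <;> by_cases hk1 : k+1 ∈ E <;>
      simp [hk, hk1, hiE, hiS, thetaHat_phi, heckeT_phi, hks, hk1s,
        filter_swapSet h2, insert_swapSet h1 h2, smul_comm ((-1:K)^_)]

lemma thetaHat_pair_heckeT_comm (t : K) (k : ℕ) (E : Finset ℕ) :
    thetaHat K k (heckeT t k (phi K E)) + thetaHat K (k+1) (heckeT t k (phi K E))
      = heckeT t k (thetaHat K k (phi K E) + thetaHat K (k+1) (phi K E)) := by
  have hne : k ≠ k + 1 := by omega
  have hfk : ((swapSet k E).filter (· < k)).card = (E.filter (· < k)).card :=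
    filter_swapSet hne E
  set a := (E.filter (· < k)).card with ha
  by_cases hk : k ∈ E <;> by_cases hk1 : k+1 ∈ E
  · -- both in E
    simp [heckeT_phi, thetaHat_phi, hk, hk1]
  · -- k ∈ E, k+1 ∉ E
    have h1 : k ∉ swapSet k E := by rw [k_mem_swapSet]; exact hk1
    have h2 : k+1 ∈ swapSet k E := k1_mem_swapSet.2 hk
    have h3 : insert k (swapSet k E) = insert (k+1) E := insert_k_swapSet hk hk1
    have h4 : (E.filter (· < k+1)).card = a + 1 := by
      rw [filter_lt_succ_card, if_pos hk]
    have h5 : k ∈ insert (k+1) E := Finset.mem_insert_of_mem hk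
    have h6 : k+1 ∈ insert (k+1) E := Finset.mem_insert_self _ _
    rw [heckeT_phi, if_pos hk, if_neg hk1, thetaHat_phi, thetaHat_phi, if_neg h1, if_pos h2,
      thetaHat_phi, thetaHat_phi, if_pos hk, if_neg hk1, map_add, map_zero, map_smul,
      heckeT_phi, if_pos h5, if_pos h6]
    rw [hfk, h3, h4, pow_succ]
    module
  · -- k ∉ E, k+1 ∈ E
    have h1 : k ∈ swapSet k E := k_mem_swapSet.2 hk1
    have h2 : k+1 ∉ swapSet k E := by rw [k1_mem_swapSet]; exact hk
    have h3 : insert (k+1) (swapSet k E) = insert k E := insert_k1_swapSet hk hk1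
    have h4 : ((swapSet k E).filter (· < k+1)).card = a + 1 := by
      rw [filter_lt_succ_card, if_pos h1, hfk]
    have h5 : k ∈ insert k E := Finset.mem_insert_self _ _
    have h6 : k+1 ∈ insert k E := Finset.mem_insert_of_mem hk1
    simp only [heckeT_phi, thetaHat_phi, map_add, map_smul, map_zero, hk, hk1, h1, h2, h5, h6,
      if_true, if_false, ite_true, ite_false, not_true, not_false_iff, smul_zero, add_zero,
      zero_add]
    rw [h3, h4, pow_succ]
    module
  · -- neither
    have h5 : k ∈ insert k E := Finset.mem_insert_self _ _
    have h6 : (k+1 ∈ insert k E) = False := by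
      simp [Finset.mem_insert, hk1, hne.symm]
    have h7 : k+1 ∈ insert (k+1) E := Finset.mem_insert_self _ _
    have h8 : (k ∈ insert (k+1) E) = False := by
      simp [Finset.mem_insert, hk, hne]
    have h4 : (E.filter (· < k+1)).card = a := by
      rw [filter_lt_succ_card, if_neg hk]; simp [ha]
    rw [heckeT_phi, if_neg hk, if_neg hk1, map_smul, map_smul,
      thetaHat_phi, if_neg hk, thetaHat_phi, if_neg hk1,
      map_add, map_smul, map_smul, heckeT_phi, if_pos h5, heckeT_phi]
    simp only [h6, h8, if_false]
    rw [if_pos h7, swapSet_insert_k hk hk1, swapSet_insert_k1 hk hk1, h4]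
    match_scalars <;> ring

end EtaAux

namespace EtaAux
variable {K : Type} [Field K]

set_option maxHeartbeats 1000000 in
lemma heckeT_opM_comm (t : K) {N k : ℕ} (hk : 1 ≤ k) (hkN : k + 1 ≤ N) (x : SP K) :
    opM K N (heckeT t k x) = heckeT t k (opM K N x) := by
  suffices h : (opM K N) ∘ₗ heckeT t k = heckeT t k ∘ₗ (opM K N) from
    LinearMap.congr_fun h x
  apply Finsupp.lhom_ext
  intro E b
  have hb : (Finsupp.single E b : SP K) = b • phi K E := by
    simp [phi, Finsupp.smul_single]
  rw [hb]
  simp only [LinearMap.comp_apply, map_smul]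
  congr 1
  have hsub : ({k, k+1} : Finset ℕ) ⊆ Finset.Icc 1 N := by
    intro x hx
    simp only [Finset.mem_insert, Finset.mem_singleton] at hx
    rcases hx with rfl | rfl <;> simp [Finset.mem_Icc] <;> omega
  have hne : k ≠ k + 1 := by omega
  rw [opM, LinearMap.sum_apply, LinearMap.sum_apply, ← Finset.sum_sdiff hsub,
    ← Finset.sum_sdiff hsub, Finset.sum_pair hne, Finset.sum_pair hne, map_add,
    map_add (heckeT t k)]
  congr 1
  · rw [map_sum]
    apply Finset.sum_congr rfl
    intro i hi
    simp only [Finset.mem_sdiff, Finset.mem_insert, Finset.mem_singleton, not_or] at hi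
    exact thetaHat_heckeT_comm t hi.2.1 hi.2.2 E
  · rw [← map_add (heckeT t k)]
    exact thetaHat_pair_heckeT_comm t k E

lemma omegaAux_opM_comm (t : K) {N : ℕ} : ∀ (d i : ℕ), 1 ≤ i → i + d ≤ N →
    ∀ x, opM K N (omegaAux t d i x) = omegaAux t d i (opM K N x) := by
  intro d
  induction d with
  | zero => intro i _ _ x; simp [omegaAux]
  | succ d ih =>
    intro i hi hiN x
    simp only [omegaAux, LinearMap.smul_apply, LinearMap.comp_apply, map_smul]
    rw [heckeT_opM_comm t hi (by omega), ih (i+1) (by omega) (by omega),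
      heckeT_opM_comm t hi (by omega)]

end EtaAux

namespace EtaAux
variable {K : Type} [Field K]

/-- the set {1,…,m-1,j} -/
def eset (m j : ℕ) : Finset ℕ := insert j (Finset.Icc 1 (m-1))

/-- the set {1,…,m-2,j} -/
def aset (m j : ℕ) : Finset ℕ := insert j (Finset.Icc 1 (m-2))

/-- η' = Σ_{j=m}^N φ_{{1..m-1,j}} -/
def etaP (K : Type) [Field K] (m N : ℕ) : SP K := ∑ j ∈ Finset.Icc m N, phi K (eset m j)

lemma filter_Icc_card {a i : ℕ} (hi : a < i) :
    ((Finset.Icc 1 a).filter (· < i)).card = a := by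
  rw [Finset.filter_true_of_mem, Nat.card_Icc]
  · omega
  · intro x hx
    simp only [Finset.mem_Icc] at hx
    omega

lemma opM_phi_E1 {m N : ℕ} (hm : 1 ≤ m) (hmN : m ≤ N) :
    opM K N (phi K (Finset.Icc 1 (m-1))) = ((-1:K)^(m-1)) • etaP K m N := by
  rw [opM, LinearMap.sum_apply,
    ← Finset.sum_subset (Finset.Icc_subset_Icc_left hm)
      (fun i hiN hi => ?_)]
  · rw [etaP, Finset.smul_sum]
    apply Finset.sum_congr rfl
    intro i hi
    simp only [Finset.mem_Icc] at hi
    rw [thetaHat_phi, if_neg (by simp only [Finset.mem_Icc]; omega),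
      filter_Icc_card (by omega)]
    rfl
  · simp only [Finset.mem_Icc] at hiN hi
    rw [thetaHat_phi, if_pos (by simp only [Finset.mem_Icc]; omega)]

lemma cancel_core (m N : ℕ) (B : Finset ℕ) (hB : ∀ x ∈ B, x < m) :
    ∑ j ∈ Finset.Icc m N, ∑ i ∈ (Finset.Icc m N).erase j,
      (((-1:K) ^ ((insert j B).filter (· < i)).card) • phi K (insert i (insert j B))) = 0 := by
  have hcard : ∀ i j : ℕ, m ≤ i → m ≤ j →
      ((insert j B).filter (· < i)).card = B.card + (if j < i then 1 else 0) := by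
    intro i j hi hj
    have hjB : j ∉ B := fun h => absurd (hB j h) (by omega)
    have hBf : B.filter (· < i) = B := Finset.filter_true_of_mem (fun x hx => by
      have := hB x hx; omega)
    rw [Finset.filter_insert, hBf]
    by_cases hji : j < i
    · rw [if_pos hji, if_pos hji, Finset.card_insert_of_notMem hjB]
    · rw [if_neg hji, if_neg hji, add_zero]
  rw [Finset.sum_sigma']
  apply Finset.sum_involution (fun p _ => (⟨p.2, p.1⟩ : (_ : ℕ) × ℕ))
  · rintro ⟨j, i⟩ ha
    simp only [Finset.mem_sigma, Finset.mem_erase, Finset.mem_Icc] at ha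
    obtain ⟨⟨hmj, hjN⟩, hij, hmi, hiN⟩ := ha
    dsimp only
    have hins : insert i (insert j B) = insert j (insert i B) := Finset.insert_comm _ _ _
    rw [hcard i j hmi hmj, hcard j i hmj hmi, hins]
    rcases lt_or_gt_of_ne hij with h | h
    · rw [if_neg (by omega), if_pos h, pow_succ]
      module
    · rw [if_pos h, if_neg (by omega), pow_succ]
      module
  · rintro ⟨j, i⟩ ha _
    simp only [Finset.mem_sigma, Finset.mem_erase] at ha
    intro hc
    have := congrArg Sigma.fst hc
    simp only at this
    exact ha.2.1 this
  · rintro ⟨j, i⟩ ha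
    simp only [Finset.mem_sigma, Finset.mem_erase, Finset.mem_Icc] at ha ⊢
    omega
  · rintro ⟨j, i⟩ ha
    rfl

end EtaAux

namespace EtaAux
variable {K : Type} [Field K]

lemma mem_eset {m j x : ℕ} : x ∈ eset m j ↔ x = j ∨ (1 ≤ x ∧ x ≤ m-1) := by
  simp [eset, Finset.mem_insert, Finset.mem_Icc]

lemma mem_aset {m j x : ℕ} : x ∈ aset m j ↔ x = j ∨ (1 ≤ x ∧ x ≤ m-2) := by
  simp [aset, Finset.mem_insert, Finset.mem_Icc]

lemma opM_etaP {m N : ℕ} (hm : 1 ≤ m) (hmN : m ≤ N) : opM K N (etaP K m N) = 0 := by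
  rw [etaP, map_sum]
  have step : ∀ j ∈ Finset.Icc m N, opM K N (phi K (eset m j))
      = ∑ i ∈ (Finset.Icc m N).erase j,
          (((-1:K) ^ ((eset m j).filter (· < i)).card) • phi K (insert i (eset m j))) := by
    intro j hj
    simp only [Finset.mem_Icc] at hj
    rw [opM, LinearMap.sum_apply,
      ← Finset.sum_subset
        (show (Finset.Icc m N).erase j ⊆ Finset.Icc 1 N from fun x hx => by
          simp only [Finset.mem_erase, Finset.mem_Icc] at hx ⊢; omega)
        (fun i hiN hi => ?_)]
    · apply Finset.sum_congr rfl
      intro i hi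
      simp only [Finset.mem_erase, Finset.mem_Icc] at hi
      rw [thetaHat_phi, if_neg (by rw [mem_eset]; push_neg; constructor <;> omega)]
    · simp only [Finset.mem_Icc] at hiN
      simp only [Finset.mem_erase, Finset.mem_Icc, not_and, not_or] at hi
      rw [thetaHat_phi, if_pos (by rw [mem_eset]; omega)]
  rw [Finset.sum_congr rfl step]
  exact cancel_core m N (Finset.Icc 1 (m-1))
    (fun x hx => by simp only [Finset.mem_Icc] at hx; omega)

lemma opM_asum {m N : ℕ} (hm : 2 ≤ m) (hmN : m ≤ N) :
    opM K N (∑ j ∈ Finset.Icc m N, phi K (aset m j)) = ((-1:K)^m) • etaP K m N := by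
  rw [map_sum]
  have step : ∀ j ∈ Finset.Icc m N, opM K N (phi K (aset m j))
      = ((-1:K)^(m-2)) • phi K (eset m j) +
        ∑ i ∈ (Finset.Icc m N).erase j,
          (((-1:K) ^ ((aset m j).filter (· < i)).card) • phi K (insert i (aset m j))) := by
    intro j hj
    simp only [Finset.mem_Icc] at hj
    have hmem : m - 1 ∉ (Finset.Icc m N).erase j := by
      simp only [Finset.mem_erase, Finset.mem_Icc]; omega
    rw [opM, LinearMap.sum_apply,
      ← Finset.sum_subset
        (show insert (m-1) ((Finset.Icc m N).erase j) ⊆ Finset.Icc 1 N from fun x hx => by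
          simp only [Finset.mem_insert, Finset.mem_erase, Finset.mem_Icc] at hx ⊢; omega)
        (fun i hiN hi => ?_), Finset.sum_insert hmem]
    · congr 1
      · -- the i = m-1 term
        rw [thetaHat_phi, if_neg (by rw [mem_aset]; push_neg; constructor <;> omega)]
        have h1 : (aset m j).filter (· < m-1) = Finset.Icc 1 (m-2) := by
          rw [aset, Finset.filter_insert, if_neg (by omega),
            Finset.filter_true_of_mem (fun x hx => by
              simp only [Finset.mem_Icc] at hx; omega)]
        have h2 : insert (m-1) (aset m j) = eset m j := by
          ext x
          rw [Finset.mem_insert, mem_aset, mem_eset]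
          omega
        rw [h1, h2, Nat.card_Icc]
        norm_num
      · apply Finset.sum_congr rfl
        intro i hi
        simp only [Finset.mem_erase, Finset.mem_Icc] at hi
        rw [thetaHat_phi, if_neg (by rw [mem_aset]; push_neg; constructor <;> omega)]
    · simp only [Finset.mem_Icc] at hiN
      simp only [Finset.mem_insert, Finset.mem_erase, Finset.mem_Icc, not_and, not_or] at hi
      rw [thetaHat_phi, if_pos (by rw [mem_aset]; omega)]
  rw [Finset.sum_congr rfl step, Finset.sum_add_distrib]
  simp only [aset]
  rw [cancel_core m N (Finset.Icc 1 (m-2))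
      (fun x hx => by simp only [Finset.mem_Icc] at hx; omega),
    add_zero, ← Finset.smul_sum, ← etaP]
  congr 1
  rw [show m = (m-2)+2 by omega, pow_add]
  norm_num

end EtaAux

namespace EtaAux
variable {K : Type} [Field K]

lemma heckeT_etaP_low (t : K) {m N k : ℕ} (hk : 1 ≤ k) (hk2 : k ≤ m-2) :
    heckeT t k (etaP K m N) = -etaP K m N := by
  rw [etaP, map_sum]
  rw [Finset.sum_congr rfl (fun j hj => ?_), ← Finset.sum_neg_distrib]
  rw [heckeT_phi, if_pos (by rw [mem_eset]; omega), if_pos (by rw [mem_eset]; omega)]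

lemma eset_not_mem {m j x : ℕ} (hx : m ≤ x) (hxj : x ≠ j) : x ∉ eset m j := by
  rw [mem_eset]; omega

lemma swapSet_eset (t : K) {m k : ℕ} (hk : m ≤ k) :
    swapSet k (eset m k) = eset m (k+1) := by
  rw [eset, eset]
  exact swapSet_insert_k (by simp [Finset.mem_Icc]; omega) (by simp [Finset.mem_Icc]; omega)

lemma heckeT_etaP_high (t : K) {m N k : ℕ} (hk : m ≤ k) (hkN : k+1 ≤ N) :
    heckeT t k (etaP K m N) = t • etaP K m N := by
  have hne : k ≠ k+1 := by omega
  have hpair : ({k, k+1} : Finset ℕ) ⊆ Finset.Icc m N := by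
    intro x hx
    simp only [Finset.mem_insert, Finset.mem_singleton] at hx
    rcases hx with rfl | rfl <;> simp [Finset.mem_Icc] <;> omega
  have hknm : k ∉ Finset.Icc 1 (m-1) := by simp [Finset.mem_Icc]; omega
  have hk1nm : k+1 ∉ Finset.Icc 1 (m-1) := by simp [Finset.mem_Icc]; omega
  have hL : heckeT t k (etaP K m N)
      = ∑ j ∈ Finset.Icc m N \ {k, k+1}, t • phi K (eset m j) +
        (phi K (eset m (k+1)) +
          ((t-1) • phi K (eset m (k+1)) + t • phi K (eset m k))) := by
    rw [etaP, map_sum, ← Finset.sum_sdiff hpair, Finset.sum_pair hne]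
    congr 1
    · apply Finset.sum_congr rfl
      intro j hj
      simp only [Finset.mem_sdiff, Finset.mem_Icc, Finset.mem_insert,
        Finset.mem_singleton, not_or] at hj
      rw [heckeT_phi, if_neg (eset_not_mem (by omega) (by omega)),
        if_neg (eset_not_mem (by omega) (by omega))]
    · congr 1
      · rw [heckeT_phi, if_pos (by rw [mem_eset]; omega),
          if_neg (eset_not_mem (by omega) hne.symm), swapSet_eset t hk]
      · rw [heckeT_phi, if_neg (eset_not_mem (by omega) hne),
          if_pos (by rw [mem_eset]; omega), eset, eset,
          swapSet_insert_k1 hknm hk1nm]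
  have hR : t • etaP K m N
      = ∑ j ∈ Finset.Icc m N \ {k, k+1}, t • phi K (eset m j) +
        (t • phi K (eset m k) + t • phi K (eset m (k+1))) := by
    rw [etaP, Finset.smul_sum, ← Finset.sum_sdiff hpair, Finset.sum_pair hne]
  rw [hL, hR]
  congr 1
  module

lemma aset_not_mem {m j x : ℕ} (hx : m-1 ≤ x) (hxj : x ≠ j) : x ∉ aset m j := by
  rw [mem_aset]; omega

lemma omega_aset_chain (t : K) (ht : t ≠ 0) {m N : ℕ} (hm : 2 ≤ m) (hmN : m ≤ N) :
    ∀ d, d ≤ N - m →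
      omegaAux t d (N - d) (phi K (aset m (N-d)))
        = phi K (aset m (N-d)) +
          (1 - t⁻¹) • ∑ j ∈ Finset.Icc (N-d+1) N, phi K (aset m j) := by
  intro d
  induction d with
  | zero =>
    intro _
    rw [Finset.Icc_eq_empty (by omega), Finset.sum_empty, smul_zero, add_zero]
    rfl
  | succ d ih =>
    intro hd
    obtain ⟨k, hk⟩ : ∃ k, N - (d+1) = k := ⟨_, rfl⟩
    have hk1 : N - d = k + 1 := by omega
    have hkm : m ≤ k := by omega
    have hkN : k + 1 ≤ N := by omega
    rw [hk1] at ih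
    rw [hk]
    have hT1 : heckeT t k (phi K (aset m k)) = phi K (aset m (k+1)) := by
      rw [heckeT_phi, if_pos (by rw [mem_aset]; omega),
        if_neg (aset_not_mem (by omega) (by omega)), aset, aset,
        swapSet_insert_k (by simp [Finset.mem_Icc]; omega) (by simp [Finset.mem_Icc]; omega)]
    have hT2 : heckeT t k (phi K (aset m (k+1)))
        = (t-1) • phi K (aset m (k+1)) + t • phi K (aset m k) := by
      rw [heckeT_phi, if_neg (aset_not_mem (by omega) (by omega)),
        if_pos (by rw [mem_aset]; omega), aset, aset,
        swapSet_insert_k1 (by simp [Finset.mem_Icc]; omega) (by simp [Finset.mem_Icc]; omega)]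
    have hT3 : ∀ j ∈ Finset.Icc (k+2) N, heckeT t k (phi K (aset m j)) = t • phi K (aset m j) := by
      intro j hj
      simp only [Finset.mem_Icc] at hj
      rw [heckeT_phi, if_neg (aset_not_mem (by omega) (by omega)),
        if_neg (aset_not_mem (by omega) (by omega))]
    have hicc : Finset.Icc (k+1) N = insert (k+1) (Finset.Icc (k+2) N) := by
      ext x; simp only [Finset.mem_Icc, Finset.mem_insert]; omega
    have hnotmem : k+1 ∉ Finset.Icc (k+2) N := by simp [Finset.mem_Icc]
    show (t⁻¹ • (heckeT t k ∘ₗ omegaAux t d (k + 1) ∘ₗ heckeT t k)) (phi K (aset m k)) = _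
    simp only [LinearMap.smul_apply, LinearMap.comp_apply]
    rw [hT1, ih (by omega), map_add, map_smul, map_sum,
      Finset.sum_congr rfl hT3, hT2, ← Finset.smul_sum,
      hicc, Finset.sum_insert hnotmem]
    match_scalars <;> field_simp

lemma omega_etaP_high (t : K) (ht : t ≠ 0) {m N : ℕ} (hm : 1 ≤ m) (hmN : m ≤ N) :
    ∀ d, d ≤ N - m →
      omegaAux t d (N - d) (etaP K m N) = (t^d) • etaP K m N := by
  intro d
  induction d with
  | zero => intro _; rw [pow_zero, one_smul]; rfl
  | succ d ih =>
    intro hd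
    obtain ⟨k, hk⟩ : ∃ k, N - (d+1) = k := ⟨_, rfl⟩
    have hk1 : N - d = k + 1 := by omega
    have hkm : m ≤ k := by omega
    have hkN : k + 1 ≤ N := by omega
    rw [hk1] at ih
    rw [hk]
    show (t⁻¹ • (heckeT t k ∘ₗ omegaAux t d (k + 1) ∘ₗ heckeT t k)) (etaP K m N) = _
    simp only [LinearMap.smul_apply, LinearMap.comp_apply]
    rw [heckeT_etaP_high t hkm hkN, map_smul, ih (by omega), map_smul, map_smul,
      heckeT_etaP_high t hkm hkN]
    match_scalars
    field_simp
    ring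

end EtaAux

namespace EtaAux
variable {K : Type} [Field K]

lemma omega_eta_m1 (t : K) (ht : t ≠ 0) {m N : ℕ} (hm : 2 ≤ m) (hmN : m ≤ N) :
    omega t N (m-1) (opM K N (phi K (Finset.Icc 1 (m-1))))
      = t⁻¹ • opM K N (phi K (Finset.Icc 1 (m-1))) := by
  have hcomm := omegaAux_opM_comm (N := N) t (N-(m-1)) (m-1) (by omega) (by omega)
    (phi K (Finset.Icc 1 (m-1)))
  rw [omega, ← hcomm, show N - (m-1) = (N-m)+1 by omega]
  show opM K N ((t⁻¹ • (heckeT t (m-1) ∘ₗ omegaAux t (N-m) ((m-1)+1) ∘ₗ heckeT t (m-1)))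
    (phi K (Finset.Icc 1 (m-1)))) = _
  rw [show m-1+1 = m by omega]
  simp only [LinearMap.smul_apply, LinearMap.comp_apply]
  have hE1 : Finset.Icc 1 (m-1) = aset m (m-1) := by
    ext x; rw [mem_aset]; simp only [Finset.mem_Icc]; omega
  have hswap1 : swapSet (m-1) (aset m (m-1)) = aset m m := by
    have h := swapSet_insert_k (k := m-1) (E := Finset.Icc 1 (m-2))
      (by simp [Finset.mem_Icc]; omega) (by simp [Finset.mem_Icc]; omega)
    rw [show m-1+1 = m by omega] at h
    exact h
  have hswap2 : swapSet (m-1) (aset m m) = aset m (m-1) := by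
    have h := swapSet_insert_k1 (k := m-1) (E := Finset.Icc 1 (m-2))
      (by simp [Finset.mem_Icc]; omega) (by simp [Finset.mem_Icc]; omega)
    rw [show m-1+1 = m by omega] at h
    exact h
  have hT1 : heckeT t (m-1) (phi K (Finset.Icc 1 (m-1))) = phi K (aset m m) := by
    rw [hE1, heckeT_phi, if_pos (by rw [mem_aset]; omega),
      if_neg (aset_not_mem (by omega) (by omega)), hswap1]
  rw [hT1]
  have hchain := omega_aset_chain t ht hm hmN (N-m) le_rfl
  rw [show N-(N-m) = m by omega] at hchain
  rw [hchain]
  have hT2 : heckeT t (m-1) (phi K (aset m m))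
      = (t-1) • phi K (aset m m) + t • phi K (aset m (m-1)) := by
    rw [heckeT_phi, if_neg (aset_not_mem (by omega) (by omega)),
      if_pos (by rw [mem_aset]; omega), hswap2]
  have hT3 : ∀ j ∈ Finset.Icc (m+1) N,
      heckeT t (m-1) (phi K (aset m j)) = t • phi K (aset m j) := by
    intro j hj
    simp only [Finset.mem_Icc] at hj
    rw [heckeT_phi, if_neg (aset_not_mem (by omega) (by omega)),
      if_neg (aset_not_mem (by omega) (by omega))]
  rw [map_add, map_smul (heckeT t (m-1)), map_sum, Finset.sum_congr rfl hT3, hT2, ← Finset.smul_sum]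
  have hicc : Finset.Icc m N = insert m (Finset.Icc (m+1) N) := by
    ext x; simp only [Finset.mem_Icc, Finset.mem_insert]; omega
  have hnm : m ∉ Finset.Icc (m+1) N := by simp [Finset.mem_Icc]
  have hasum := opM_asum (K := K) hm hmN (N := N)
  rw [hicc, Finset.sum_insert hnm, map_add] at hasum
  have hY : opM K N (∑ j ∈ Finset.Icc (m+1) N, phi K (aset m j))
      = ((-1:K)^m) • etaP K m N - opM K N (phi K (aset m m)) := by
    rw [← hasum]; abel
  have hpow : ((-1:K))^m = ((-1:K))^(m-1) * (-1) := by
    have := pow_succ (-1:K) (m-1)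
    rw [show m-1+1 = m by omega] at this
    exact this
  simp only [map_smul, map_add]
  rw [hY, ← hE1, opM_phi_E1 (by omega) hmN, hpow]
  match_scalars <;> field_simp <;> ring

lemma omega_eta_low (t : K) (ht : t ≠ 0) {m N : ℕ} (hm : 2 ≤ m) (hmN : m ≤ N) :
    ∀ d i, i = m-1-d → 1 ≤ i →
      omega t N i (opM K N (phi K (Finset.Icc 1 (m-1))))
        = (t ^ ((i:ℤ) - m)) • opM K N (phi K (Finset.Icc 1 (m-1))) := by
  intro d
  induction d with
  | zero =>
    intro i hi h1
    have : i = m - 1 := by omega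
    subst this
    rw [show ((m-1:ℕ):ℤ) - m = -1 by omega, zpow_neg_one]
    exact omega_eta_m1 t ht hm hmN
  | succ d ih =>
    intro i hi h1
    have hi1 : i + 1 = m-1-d := by omega
    have h2 : i ≤ m - 2 := by omega
    have hiN : i < N := by omega
    have hfuel : N - i = (N - (i+1)) + 1 := by omega
    rw [omega, hfuel]
    show (t⁻¹ • (heckeT t i ∘ₗ omegaAux t (N-(i+1)) (i+1) ∘ₗ heckeT t i))
      (opM K N (phi K (Finset.Icc 1 (m-1)))) = _
    simp only [LinearMap.smul_apply, LinearMap.comp_apply]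
    have hTeta : heckeT t i (opM K N (phi K (Finset.Icc 1 (m-1))))
        = -(opM K N (phi K (Finset.Icc 1 (m-1)))) := by
      rw [opM_phi_E1 (by omega) hmN, map_smul, heckeT_etaP_low t h1 h2, smul_neg]
    have ih' := ih (i+1) hi1 (by omega)
    rw [omega] at ih'
    have hz : t⁻¹ * t^(((i+1:ℕ):ℤ) - m) = t^((i:ℤ) - m) := by
      rw [← zpow_neg_one t, ← zpow_add₀ ht]
      congr 1
      push_cast
      ring
    rw [hTeta, map_neg, ih', map_neg, map_smul, hTeta]
    simp only [smul_neg, neg_neg, smul_smul]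
    rw [hz]

end EtaAux

/-- η = M φ_{E₁} with E₁ = {1, …, m-1} lies in ker M and is a
simultaneous ω_i-eigenvector: ω_i η = t^{c(i)} η with c(i) = i-m for
1 ≤ i ≤ m-1 and c(i) = N-i for m ≤ i ≤ N. -/
theorem eta_eigenvector (K : Type) [Field K] (t : K) (ht : t ≠ 0) (N m : ℕ)
    (hm1 : 1 ≤ m) (hmN : m ≤ N) :
    opM K N (opM K N (phi K (Finset.Icc 1 (m - 1)))) = 0 ∧
    ∀ i, 1 ≤ i → i ≤ N →
      omega t N i (opM K N (phi K (Finset.Icc 1 (m - 1)))) =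
        (t ^ (if i < m then (i : ℤ) - m else (N : ℤ) - i)) •
          opM K N (phi K (Finset.Icc 1 (m - 1))) := by
  constructor
  · rw [EtaAux.opM_phi_E1 hm1 hmN, map_smul, EtaAux.opM_etaP hm1 hmN, smul_zero]
  · intro i h1 hN
    by_cases him : i < m
    · rw [if_pos him]
      exact EtaAux.omega_eta_low t ht (by omega) hmN (m-1-i) i (by omega) h1
    · rw [if_neg him]
      push_neg at him
      have key := EtaAux.omega_etaP_high t ht hm1 hmN (N-i) (by omega)
      rw [show N - (N-i) = i by omega] at key
      rw [show ((N:ℤ) - i) = ((N - i : ℕ) : ℤ) by omega, zpow_natCast,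
        EtaAux.opM_phi_E1 hm1 hmN, omega, map_smul, key, smul_comm]
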